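/- arXiv:2402.02147 — 2 statements merged into one kernel-verified Lean document; each statement's English description precedes it below -/
import Mathlib

section
/- Consider a networked two-team game on a graph G = (V,E), where agent i from team m has payoff u^i = Σ_{j:(i,j)∈E, j∈I^m} r^j − Σ_{j:(i,j)∈E, j∉I^m} r^j, with r^j depending only on j's and j's neighbors' actions. Define φ^m = Σ_{j∈I^m} r^j − Σ_{j∉I^m} r^j. Then for each agent i ∈ I^m and any unilateral deviation â^i, u^i(â^i, a^{−i}) − u^i(a) = φ^m(â^i, a^{−i}) − φ^m(a), i.e., φ^m is an exact potential for team m, and the two team potentials sum to zero: φ^1(a) + φ^2(a) = 0 for all a. -/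
open Finset

/-- Networked two-team game: agents are vertices `V` of a graph with (undirected, reflexive)
adjacency `E`, split into two teams by `team : V → Bool`. Each vertex `j` has a local payoff
`r j` depending only on the actions of `j` and its neighbors. Agent `i`'s payoff adds the
neighboring teammates' local payoffs and subtracts the other neighbors' local payoffs.
Then `φ^m = Σ_{j∈I^m} r^j − Σ_{j∉I^m} r^j` is an exact potential for team `m`, and the two
team potentials sum to zero. -/
theorem networked_two_team_potential
    {V : Type*} [Fintype V] [DecidableEq V] {Act : V → Type*}
    (E : V → V → Prop) [∀ i j, Decidable (E i j)]
    (hsymm : ∀ i j, E i j ↔ E j i) (hrefl : ∀ i, E i i)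
    (team : V → Bool)
    (r : V → (∀ v, Act v) → ℝ)
    (hloc : ∀ j (a b : ∀ v, Act v), (∀ v, (v = j ∨ E j v) → a v = b v) → r j a = r j b)
    (u : V → (∀ v, Act v) → ℝ)
    (hu : ∀ i a, u i a
      = ∑ j ∈ Finset.univ.filter (fun j => E i j ∧ team j = team i), r j a
        - ∑ j ∈ Finset.univ.filter (fun j => E i j ∧ team j ≠ team i), r j a)
    (φ : Bool → (∀ v, Act v) → ℝ)
    (hφ : ∀ m a, φ m a
      = ∑ j ∈ Finset.univ.filter (fun j => team j = m), r j a
        - ∑ j ∈ Finset.univ.filter (fun j => team j ≠ m), r j a) :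
    (∀ i (a : ∀ v, Act v) (a' : Act i),
      u i (Function.update a i a') - u i a
        = φ (team i) (Function.update a i a') - φ (team i) a) ∧
    (∀ a, φ true a + φ false a = 0) := by
  constructor
  · intro i a a'
    have hfix : ∀ j, ¬ E i j → r j (Function.update a i a') = r j a := by
      intro j hij
      apply hloc
      intro v hv
      have hvi : v ≠ i := by
        rintro rfl
        rcases hv with rfl | h
        · exact hij (hrefl _)
        · exact hij ((hsymm _ _).mp h)
      simp [Function.update_of_ne hvi]
    have key : ∀ (p : V → Prop) [DecidablePred p],
        ∑ j ∈ Finset.univ.filter p, (r j (Function.update a i a') - r j a)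
          = ∑ j ∈ Finset.univ.filter (fun j => E i j ∧ p j),
              (r j (Function.update a i a') - r j a) := by
      intro p _
      rw [Finset.sum_filter, Finset.sum_filter]
      apply Finset.sum_congr rfl
      intro j _
      by_cases hij : E i j
      · simp [hij]
      · simp [hij, hfix j hij]
    rw [hu, hu, hφ, hφ]
    have h1 := key (fun j => team j = team i)
    have h2 := key (fun j => team j ≠ team i)
    rw [Finset.sum_sub_distrib] at h1 h2
    rw [Finset.sum_sub_distrib] at h1
    rw [Finset.sum_sub_distrib] at h2
    linarith
  · intro a
    rw [hφ, hφ]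
    have e1 : Finset.univ.filter (fun j => team j ≠ true)
        = Finset.univ.filter (fun j => team j = false) := by
      apply Finset.filter_congr; intro j _; simp
    have e2 : Finset.univ.filter (fun j => team j ≠ false)
        = Finset.univ.filter (fun j => team j = true) := by
      apply Finset.filter_congr; intro j _; simp
    rw [e1, e2]
    ring
end

section
/- The softmax map q ↦ br_τ(q) from ℝ^A (with sup norm) to Δ(A) ⊂ ℝ^A (with ℓ¹ norm) is Lipschitz continuous with a Lipschitz constant depending only on τ and |A| (in particular one may take constant 2/τ): ‖br_τ(q) − br_τ(q')‖₁ ≤ (2/τ)·‖q − q'‖_∞ for all q, q' : A → ℝ. -/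
open Real Finset

/-- Smoothed best response: softmax with temperature `τ`. -/
noncomputable def br {A : Type*} [Fintype A] (τ : ℝ) (q : A → ℝ) : A → ℝ :=
  fun a => Real.exp (q a / τ) / ∑ a', Real.exp (q a' / τ)

/-- If `p` and `p'` both sum to `1` and the positive part of `p' - p` is pointwise
bounded by `p' * C`, then the ℓ¹ distance is at most `2 * C`. -/
private lemma key_l1 {A : Type*} [Fintype A]
    (p p' : A → ℝ) (hp : ∑ a, p a = 1) (hp' : ∑ a, p' a = 1)
    (C : ℝ) (h : ∀ a, max (p' a - p a) 0 ≤ p' a * C) :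
    ∑ a, |p a - p' a| ≤ 2 * C := by
  have habs : ∀ a, |p a - p' a| = 2 * max (p' a - p a) 0 + (p a - p' a) := by
    intro a
    rcases le_total (p a) (p' a) with h1 | h1
    · rw [abs_of_nonpos (by linarith), max_eq_left (by linarith)]; ring
    · rw [abs_of_nonneg (by linarith), max_eq_right (by linarith)]; ring
  calc ∑ a, |p a - p' a| = ∑ a, (2 * max (p' a - p a) 0 + (p a - p' a)) := by
        simp_rw [habs]
    _ = 2 * ∑ a, max (p' a - p a) 0 + ((∑ a, p a) - ∑ a, p' a) := by
        rw [Finset.sum_add_distrib, Finset.mul_sum, Finset.sum_sub_distrib]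
    _ = 2 * ∑ a, max (p' a - p a) 0 := by rw [hp, hp']; ring
    _ ≤ 2 * ∑ a, p' a * C := by
        have h2 : ∑ a, max (p' a - p a) 0 ≤ ∑ a, p' a * C :=
          Finset.sum_le_sum (fun a _ => h a)
        linarith
    _ = 2 * C := by rw [← Finset.sum_mul, hp', one_mul]

/-- The softmax map is Lipschitz from `(ℝ^A, ‖·‖_∞)` to `(Δ(A), ‖·‖₁)` with constant `2/τ`:
`‖br_τ(q) − br_τ(q')‖₁ ≤ (2/τ)·‖q − q'‖_∞`. -/
theorem softmax_lipschitz {A : Type*} [Fintype A] [Nonempty A]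
    {τ : ℝ} (hτ : 0 < τ) (q q' : A → ℝ) :
    ∑ a, |br τ q a - br τ q' a|
      ≤ (2 / τ) * Finset.univ.sup' Finset.univ_nonempty (fun a => |q a - q' a|) := by
  set M' := Finset.univ.sup' Finset.univ_nonempty (fun a => |q a - q' a|) with hM'def
  have hq : ∀ a, |q a - q' a| ≤ M' := fun a => Finset.le_sup' (fun a => |q a - q' a|) (Finset.mem_univ a)
  have hM'0 : 0 ≤ M' := le_trans (abs_nonneg _) (hq (Classical.arbitrary A))
  set M : ℝ := M' / τ with hMdef
  have hM0 : 0 ≤ M := div_nonneg hM'0 hτ.le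
  set S := ∑ a, Real.exp (q a / τ) with hSdef
  set T := ∑ a, Real.exp (q' a / τ) with hTdef
  have hS : 0 < S := Finset.sum_pos (fun a _ => Real.exp_pos _) Finset.univ_nonempty
  have hT : 0 < T := Finset.sum_pos (fun a _ => Real.exp_pos _) Finset.univ_nonempty
  have hsum1 : ∑ a, br τ q a = 1 := by
    simp only [br, ← hSdef]
    rw [← Finset.sum_div, div_self hS.ne']
  have hsum1' : ∑ a, br τ q' a = 1 := by
    simp only [br, ← hTdef]
    rw [← Finset.sum_div, div_self hT.ne']
  -- pointwise exponential bounds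
  have hef : ∀ a, Real.exp (q' a / τ) * Real.exp (-M) ≤ Real.exp (q a / τ) := by
    intro a
    rw [← Real.exp_add]
    apply Real.exp_le_exp.mpr
    have h1 : q' a - M' ≤ q a := by
      have := abs_le.mp (hq a)
      linarith [this.1]
    calc q' a / τ + -M = (q' a - M') / τ := by rw [hMdef]; ring
      _ ≤ q a / τ := (div_le_div_iff_of_pos_right hτ).mpr h1
  have hfe : ∀ a, Real.exp (q a / τ) * Real.exp (-M) ≤ Real.exp (q' a / τ) := by
    intro a
    rw [← Real.exp_add]
    apply Real.exp_le_exp.mpr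
    have h1 : q a - M' ≤ q' a := by
      have := abs_le.mp (hq a)
      linarith [this.2]
    calc q a / τ + -M = (q a - M') / τ := by rw [hMdef]; ring
      _ ≤ q' a / τ := (div_le_div_iff_of_pos_right hτ).mpr h1
  have hexpM : Real.exp (-M) ≤ 1 := Real.exp_le_one_iff.mpr (by linarith)
  have hfinal : 2 * (1 - Real.exp (-M)) ≤ (2 / τ) * M' := by
    have := Real.add_one_le_exp (-M)
    have h2M : (2 / τ) * M' = 2 * M := by rw [hMdef]; ring
    rw [h2M]; linarith
  rcases le_total S T with hST | hST
  · -- S ≤ T : bound max (br τ q' a - br τ q a) 0 ≤ br τ q' a * (1 - exp (-M))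
    refine le_trans (key_l1 (br τ q) (br τ q') hsum1 hsum1' (1 - Real.exp (-M)) ?_) hfinal
    intro a
    have hp'0 : 0 ≤ br τ q' a := div_nonneg (Real.exp_pos _).le hT.le
    apply max_le
    · -- br τ q' a - br τ q a ≤ br τ q' a * (1 - exp (-M))
      -- ⟺ br τ q' a * exp (-M) ≤ br τ q a
      have hkey : Real.exp (q' a / τ) / T * Real.exp (-M) ≤ Real.exp (q a / τ) / S := by
        rw [div_mul_eq_mul_div, div_le_div_iff₀ hT hS]
        calc Real.exp (q' a / τ) * Real.exp (-M) * S
            ≤ Real.exp (q a / τ) * S := by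
              apply mul_le_mul_of_nonneg_right (hef a) hS.le
          _ ≤ Real.exp (q a / τ) * T := by
              apply mul_le_mul_of_nonneg_left hST (Real.exp_pos _).le
      have : br τ q' a * Real.exp (-M) ≤ br τ q a := hkey
      nlinarith [hp'0]
    · exact mul_nonneg hp'0 (by linarith)
  · -- T ≤ S : symmetric
    have hcomm : ∀ a, |br τ q a - br τ q' a| = |br τ q' a - br τ q a| :=
      fun a => abs_sub_comm _ _
    simp_rw [hcomm]
    refine le_trans (key_l1 (br τ q') (br τ q) hsum1' hsum1 (1 - Real.exp (-M)) ?_) hfinal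
    intro a
    have hp0 : 0 ≤ br τ q a := div_nonneg (Real.exp_pos _).le hS.le
    apply max_le
    · have hkey : Real.exp (q a / τ) / S * Real.exp (-M) ≤ Real.exp (q' a / τ) / T := by
        rw [div_mul_eq_mul_div, div_le_div_iff₀ hS hT]
        calc Real.exp (q a / τ) * Real.exp (-M) * T
            ≤ Real.exp (q' a / τ) * T := by
              apply mul_le_mul_of_nonneg_right (hfe a) hT.le
          _ ≤ Real.exp (q' a / τ) * S := by
              apply mul_le_mul_of_nonneg_left hST (Real.exp_pos _).le
      have : br τ q a * Real.exp (-M) ≤ br τ q' a := hkey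
      nlinarith [hp0]
    · exact mul_nonneg hp0 (by linarith)
end
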